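/- By duality of the dual-norm bounds, the atomic norms satisfy: (1 − π M̄ / N) ‖z_Ω‖_{𝒜_N(Ω)} ≤ ‖z_Ω‖_{𝒜(Ω)} ≤ ‖z_Ω‖_{𝒜_N(Ω)} for all z_Ω ∈ ℂ^L and N > π M̄, i.e., the grid-based ℓ₁ atomic norm converges to the continuous atomic norm as the grid size N → ∞. -/

import Mathlib

open Complex Real
open scoped ENNReal

/-! ### Auxiliary machinery: discrete characters, convolution, and a Fejér-type construction -/

noncomputable def Ech (N : ℕ) (ρ a : ℤ) : ℂ :=
  Complex.exp (2 * ↑Real.pi * Complex.I * ρ * (a / N))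

lemma Ech_mul (N : ℕ) (ρ σ a : ℤ) : Ech N ρ a * Ech N σ a = Ech N (ρ + σ) a := by
  rw [Ech, Ech, Ech, ← Complex.exp_add]; congr 1; push_cast; ring

lemma Ech_addArg (N : ℕ) (ρ a c : ℤ) : Ech N ρ (a + c) = Ech N ρ a * Ech N ρ c := by
  rw [Ech, Ech, Ech, ← Complex.exp_add]; congr 1; push_cast; ring

lemma Ech_norm (N : ℕ) (ρ a : ℤ) : ‖Ech N ρ a‖ = 1 := by
  have : Ech N ρ a = Complex.exp (((2 * Real.pi * ρ * a / N : ℝ) : ℂ) * Complex.I) := by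
    rw [Ech]; congr 1; push_cast; ring
  rw [this]
  exact Complex.norm_exp_ofReal_mul_I _

lemma Ech_N_mul (N : ℕ) (hN : 0 < N) (ρ k : ℤ) : Ech N ρ ((N : ℤ) * k) = 1 := by
  have hN0 : (N : ℂ) ≠ 0 := Nat.cast_ne_zero.2 hN.ne'
  have : (2 * ↑Real.pi * Complex.I * ρ * (((N : ℤ) * k : ℤ) / N) : ℂ)
      = (ρ * k : ℤ) * (2 * ↑Real.pi * Complex.I) := by
    push_cast; field_simp
  rw [Ech, this, Complex.exp_int_mul_two_pi_mul_I]

lemma Ech_congr (N : ℕ) (hN : 0 < N) (ρ : ℤ) {a c : ℤ} (h : a % (N : ℤ) = c % (N : ℤ)) :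
    Ech N ρ a = Ech N ρ c := by
  obtain ⟨k, hk⟩ : (N : ℤ) ∣ (c - a) := Int.ModEq.dvd (h : Int.ModEq _ a c)
  have : c = a + (N : ℤ) * k := by omega
  rw [this, Ech_addArg, Ech_N_mul N hN, mul_one]

lemma Ech_N_mul' (N : ℕ) (hN : 0 < N) (m a : ℤ) : Ech N ((N : ℤ) * m) a = 1 := by
  have hN0 : (N : ℂ) ≠ 0 := Nat.cast_ne_zero.2 hN.ne'
  have : (2 * ↑Real.pi * Complex.I * ((N : ℤ) * m : ℤ) * ((a : ℂ) / N) : ℂ)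
      = (m * a : ℤ) * (2 * ↑Real.pi * Complex.I) := by
    push_cast; field_simp
  rw [Ech, this]
  have h2 : ((m * a : ℤ) : ℂ) * (2 * ↑Real.pi * Complex.I) = (m * a : ℤ) * (2 * ↑Real.pi * Complex.I) := rfl
  rw [h2, Complex.exp_int_mul_two_pi_mul_I]

lemma Ech_pow_nat (N : ℕ) (k : ℤ) (i : ℕ) : Ech N k i = (Ech N k 1) ^ i := by
  rw [Ech, Ech, ← Complex.exp_nat_mul]; congr 1; push_cast; ring

lemma orth (N : ℕ) (hN : 0 < N) (k : ℤ) :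
    ∑ i ∈ Finset.range N, Ech N k i = if (N : ℤ) ∣ k then (N : ℂ) else 0 := by
  have hN0 : (N : ℂ) ≠ 0 := Nat.cast_ne_zero.2 hN.ne'
  by_cases hdvd : (N : ℤ) ∣ k
  · obtain ⟨m, rfl⟩ := hdvd
    simp only [if_pos (Dvd.intro m rfl)]
    have : ∀ i ∈ Finset.range N, Ech N ((N : ℤ) * m) (i : ℤ) = 1 := fun i _ => Ech_N_mul' N hN m i
    rw [Finset.sum_congr rfl this, Finset.sum_const, Finset.card_range, nsmul_eq_mul, mul_one]
  · rw [if_neg hdvd]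
    have h2 : (2 * (Real.pi:ℂ) * Complex.I) ≠ 0 := by
      simp [Real.pi_ne_zero, Complex.I_ne_zero]
    have hr1 : Ech N k 1 ≠ 1 := by
      intro h
      rw [Ech, Complex.exp_eq_one_iff] at h
      obtain ⟨n, hn⟩ := h
      apply hdvd
      have h3 : (2 * (Real.pi:ℂ) * Complex.I) * (k : ℂ) = (2 * (Real.pi:ℂ) * Complex.I) * ((n:ℂ) * N) := by
        field_simp [hN0] at hn
        push_cast at hn
        linear_combination (2 * (Real.pi:ℂ) * Complex.I) * hn
      have h4 := mul_left_cancel₀ h2 h3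
      have h5 : k = n * N := by exact_mod_cast h4
      exact ⟨n, by rw [h5, mul_comm]⟩
    have hgeo : ∑ i ∈ Finset.range N, Ech N k i = ((Ech N k 1) ^ N - 1) / (Ech N k 1 - 1) := by
      rw [← geom_sum_eq hr1]
      exact Finset.sum_congr rfl fun i _ => Ech_pow_nat N k i
    rw [hgeo]
    have hNpow : (Ech N k 1) ^ N = 1 := by
      rw [← Ech_pow_nat]
      calc Ech N k N = Ech N k ((N:ℤ) * 1) := by norm_num
        _ = 1 := Ech_N_mul N hN k 1
    rw [hNpow, sub_self, zero_div]

lemma Ech_conj (N : ℕ) (ρ a : ℤ) : (starRingEnd ℂ) (Ech N ρ a) = Ech N (-ρ) a := by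
  rw [Ech, Ech, ← Complex.exp_conj]
  congr 1
  simp only [map_mul, map_div₀, Complex.conj_I, map_ofNat, Complex.conj_ofReal,
    map_intCast, map_natCast]
  push_cast
  ring

lemma int_dvd_small {n k : ℤ} (h : |k| < n) : n ∣ k ↔ k = 0 := by
  constructor
  · rintro ⟨j, rfl⟩
    rcases eq_or_ne j 0 with rfl | hj0
    · simp
    · exfalso
      have h1 : (1:ℤ) ≤ |j| := Int.one_le_abs hj0
      have hn : 0 < n := lt_of_le_of_lt (abs_nonneg _) h
      have : n * 1 ≤ |n * j| := by
        rw [abs_mul, abs_of_pos hn]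
        exact mul_le_mul_of_nonneg_left h1 hn.le
      simp only [mul_one] at this
      omega
  · rintro rfl; exact dvd_zero n

section FinStuff
variable (N : ℕ) [NeZero N]

noncomputable def EF (ρ : ℤ) (t : Fin N) : ℂ := Ech N ρ (t.val : ℤ)

lemma EF_add (ρ : ℤ) (s t : Fin N) : EF N ρ (s + t) = EF N ρ s * EF N ρ t := by
  have hN : 0 < N := Fin.pos s
  have h1 : ((s + t).val : ℤ) % (N : ℤ) = ((s.val + t.val : ℕ) : ℤ) % (N : ℤ) := by
    rw [Fin.val_add]; push_cast; rw [Int.emod_emod_of_dvd _ dvd_rfl]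
  rw [EF, EF, EF, Ech_congr N hN ρ h1]
  push_cast
  rw [Ech_addArg]

noncomputable def Eval (ρ : ℤ) (c : Fin N → ℂ) : ℂ := ∑ t, c t * EF N ρ t

noncomputable def conv (c d : Fin N → ℂ) : Fin N → ℂ := fun t => ∑ s, c s * d (t - s)

lemma eval_conv (ρ : ℤ) (c d : Fin N → ℂ) :
    Eval N ρ (conv N c d) = Eval N ρ c * Eval N ρ d := by
  rw [Eval, Eval, Eval, Finset.sum_mul_sum]
  simp only [conv, Finset.sum_mul]
  rw [Finset.sum_comm]
  refine Finset.sum_congr rfl fun s _ => ?_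
  rw [← Equiv.sum_comp (Equiv.subRight s) (fun u => c s * EF N ρ s * (d u * EF N ρ u))]
  refine Finset.sum_congr rfl fun t _ => ?_
  have h : s + (t - s) = t := add_sub_cancel s t
  calc c s * d (t - s) * EF N ρ t = c s * d (t - s) * EF N ρ (s + (t - s)) := by rw [h]
    _ = c s * EF N ρ s * (d ((Equiv.subRight s) t) * EF N ρ ((Equiv.subRight s) t)) := by
        rw [EF_add]; simp [Equiv.subRight]; ring

lemma l1_conv (c d : Fin N → ℂ) :
    ∑ t, ‖conv N c d t‖ ≤ (∑ t, ‖c t‖) * (∑ t, ‖d t‖) := by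
  calc ∑ t, ‖conv N c d t‖ ≤ ∑ t, ∑ s, ‖c s‖ * ‖d (t - s)‖ := by
        refine Finset.sum_le_sum fun t _ => ?_
        refine (norm_sum_le _ _).trans ?_
        refine Finset.sum_le_sum fun s _ => ?_
        rw [norm_mul]
    _ = ∑ s, ‖c s‖ * ∑ t, ‖d (t - s)‖ := by
        rw [Finset.sum_comm]; simp [Finset.mul_sum]
    _ = (∑ t, ‖c t‖) * (∑ t, ‖d t‖) := by
        rw [Finset.sum_mul]
        refine Finset.sum_congr rfl fun s _ => ?_
        rw [← Equiv.sum_comp (Equiv.subRight s) (fun u => ‖d u‖)]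
        simp [Equiv.subRight]

noncomputable def convPow (c : Fin N → ℂ) : ℕ → (Fin N → ℂ)
  | 0 => fun t => if t = 0 then 1 else 0
  | (k+1) => conv N c (convPow c k)

lemma eval_cpow (ρ : ℤ) (c : Fin N → ℂ) (k : ℕ) :
    Eval N ρ (convPow N c k) = (Eval N ρ c) ^ k := by
  induction k with
  | zero =>
      rw [convPow, Eval]
      rw [Finset.sum_eq_single 0]
      · simp [EF, Ech]
      · intro b _ hb; simp [hb]
      · simp
  | succ k ih => rw [convPow, eval_conv, ih, pow_succ]; ring

lemma l1_cpow (c : Fin N → ℂ) (k : ℕ) :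
    ∑ t, ‖convPow N c k t‖ ≤ (∑ t, ‖c t‖) ^ k := by
  induction k with
  | zero =>
      rw [convPow]
      rw [Finset.sum_eq_single (0 : Fin N)]
      · simp
      · intro b _ hb; simp [hb]
      · simp
  | succ k ih =>
      rw [convPow, pow_succ]
      calc ∑ t, ‖conv N c (convPow N c k) t‖ ≤ (∑ t, ‖c t‖) * (∑ t, ‖convPow N c k t‖) := l1_conv N _ _
        _ ≤ (∑ t, ‖c t‖) ^ k.succ := by
            rw [pow_succ]
            have h1 : (0:ℝ) ≤ ∑ t, ‖c t‖ := Finset.sum_nonneg fun t _ => norm_nonneg _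
            calc (∑ t, ‖c t‖) * (∑ t, ‖convPow N c k t‖) ≤ (∑ t, ‖c t‖) * (∑ t, ‖c t‖)^k :=
                  mul_le_mul_of_nonneg_left ih h1
              _ = (∑ t, ‖c t‖)^k * (∑ t, ‖c t‖) := by ring

lemma cpow_bound (c : Fin N → ℂ) (k : ℕ) (t : Fin N) : ‖convPow N c k t‖ ≤ (∑ s, ‖c s‖) ^ k :=
  le_trans (Finset.single_le_sum (f := fun t => ‖convPow N c k t‖) (fun s _ => norm_nonneg _)
    (Finset.mem_univ t)) (l1_cpow N c k)

noncomputable def Gk (b : ℕ) (t : Fin N) : ℂ := ∑ s ∈ Finset.range b, Ech N (-(s:ℤ)) t.val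

noncomputable def lam (b : ℕ) (t : Fin N) : ℂ := (N:ℂ)⁻¹ * (Gk N b t * (starRingEnd ℂ) (Gk N b t))

end FinStuff

lemma eval_lam (N b : ℕ) [NeZero N] (hbN : 2 * b < N) (ρ : ℤ) (hρ : |ρ| ≤ b) :
    Eval N ρ (lam N b) = (((b:ℤ) - |ρ| : ℤ) : ℂ) := by
  have hN : 0 < N := Nat.pos_of_ne_zero (NeZero.ne N)
  have hN0 : (N : ℂ) ≠ 0 := Nat.cast_ne_zero.2 hN.ne'
  have expand : ∀ t : Fin N, lam N b t * EF N ρ t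
      = (N:ℂ)⁻¹ * ∑ s ∈ Finset.range b, ∑ s' ∈ Finset.range b,
          Ech N (-(s:ℤ) + (s':ℤ) + ρ) t.val := by
    intro t
    rw [lam, Gk, map_sum]
    have hconj : ∀ s ∈ Finset.range b, (starRingEnd ℂ) (Ech N (-(s:ℤ)) t.val)
        = Ech N ((s:ℤ)) t.val := by
      intro s _; rw [Ech_conj]; norm_num
    rw [Finset.sum_congr rfl hconj, Finset.sum_mul_sum]
    rw [mul_assoc, Finset.sum_mul]
    congr 1
    refine Finset.sum_congr rfl fun s _ => ?_
    rw [Finset.sum_mul]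
    refine Finset.sum_congr rfl fun s' _ => ?_
    rw [EF, Ech_mul, Ech_mul]
  rw [Eval, Finset.sum_congr rfl (fun t _ => expand t), ← Finset.mul_sum]
  have swap : ∑ t : Fin N, ∑ s ∈ Finset.range b, ∑ s' ∈ Finset.range b,
        Ech N (-(s:ℤ) + (s':ℤ) + ρ) t.val
      = ∑ s ∈ Finset.range b, ∑ s' ∈ Finset.range b, ∑ t : Fin N,
        Ech N (-(s:ℤ) + (s':ℤ) + ρ) t.val := by
    rw [Finset.sum_comm]
    exact Finset.sum_congr rfl fun s _ => Finset.sum_comm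
  rw [swap]
  have horth : ∀ s ∈ Finset.range b, ∀ s' ∈ Finset.range b,
      ∑ t : Fin N, Ech N (-(s:ℤ) + (s':ℤ) + ρ) t.val
        = if ((s':ℤ) = (s:ℤ) - ρ) then (N:ℂ) else 0 := by
    intro s hs s' hs'
    rw [Fin.sum_univ_eq_sum_range (fun i => Ech N (-(s:ℤ) + (s':ℤ) + ρ) (i:ℤ)) N]
    rw [orth N hN]
    have hs := Finset.mem_range.1 hs
    have hs' := Finset.mem_range.1 hs'
    have habs : |(-(s:ℤ) + (s':ℤ) + ρ)| < (N:ℤ) := by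
      rw [abs_le] at hρ
      rw [abs_lt]
      omega
    have hiff : ((N:ℤ) ∣ (-(s:ℤ) + (s':ℤ) + ρ)) ↔ ((s':ℤ) = (s:ℤ) - ρ) :=
      (int_dvd_small habs).trans (by omega)
    simp only [hiff]
  rw [Finset.sum_congr rfl (fun s hs => Finset.sum_congr rfl (horth s hs))]
  have hinner : ∀ s ∈ Finset.range b,
      (∑ s' ∈ Finset.range b, if ((s':ℤ) = (s:ℤ) - ρ) then (N:ℂ) else 0)
        = if (ρ ≤ (s:ℤ) ∧ (s:ℤ) < (b:ℤ) + ρ) then (N:ℂ) else 0 := by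
    intro s _
    by_cases hneg : (s:ℤ) - ρ < 0
    · rw [Finset.sum_eq_zero, if_neg (by omega)]
      intro s' _
      rw [if_neg (by omega)]
    · push_neg at hneg
      set w := ((s:ℤ) - ρ).toNat with hw
      have hcond : ∀ s' : ℕ, ((s':ℤ) = (s:ℤ) - ρ) ↔ s' = w := by intro s'; omega
      calc (∑ s' ∈ Finset.range b, if ((s':ℤ) = (s:ℤ) - ρ) then (N:ℂ) else 0)
          = ∑ s' ∈ Finset.range b, if (s' = w) then (N:ℂ) else 0 := by
            refine Finset.sum_congr rfl fun s' _ => ?_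
            simp only [hcond]
        _ = if w ∈ Finset.range b then (N:ℂ) else 0 := Finset.sum_ite_eq' _ _ _
        _ = if (ρ ≤ (s:ℤ) ∧ (s:ℤ) < (b:ℤ) + ρ) then (N:ℂ) else 0 := by
            congr 1
            simp only [Finset.mem_range, eq_iff_iff]
            omega
  rw [Finset.sum_congr rfl hinner]
  have hcount : (∑ s ∈ Finset.range b, if (ρ ≤ (s:ℤ) ∧ (s:ℤ) < (b:ℤ) + ρ) then (N:ℂ) else 0)
      = (N:ℂ) * (((b:ℤ) - |ρ|).toNat : ℂ) := by
    have hsplit : ∀ s ∈ Finset.range b, (if (ρ ≤ (s:ℤ) ∧ (s:ℤ) < (b:ℤ) + ρ) then (N:ℂ) else 0)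
        = (N:ℂ) * (if (ρ ≤ (s:ℤ) ∧ (s:ℤ) < (b:ℤ) + ρ) then (1:ℂ) else 0) := by
      intro s _; split <;> simp
    rw [Finset.sum_congr rfl hsplit, ← Finset.mul_sum]
    congr 1
    rw [Finset.sum_boole]
    congr 1
    by_cases hsgn : 0 ≤ ρ
    · have hfil : (Finset.range b).filter (fun s : ℕ => ρ ≤ (s:ℤ) ∧ (s:ℤ) < (b:ℤ) + ρ)
          = Finset.Ico ρ.toNat b := by
        ext x
        simp only [Finset.mem_filter, Finset.mem_range, Finset.mem_Ico]
        omega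
      rw [hfil, Nat.card_Ico, abs_of_nonneg hsgn]
      omega
    · have hfil : (Finset.range b).filter (fun s : ℕ => ρ ≤ (s:ℤ) ∧ (s:ℤ) < (b:ℤ) + ρ)
          = Finset.range ((b:ℤ) + ρ).toNat := by
        ext x
        simp only [Finset.mem_filter, Finset.mem_range]
        omega
      rw [hfil, Finset.card_range, abs_of_neg (by omega : ρ < 0)]
      omega
  rw [hcount, ← mul_assoc, inv_mul_cancel₀ hN0, one_mul]
  have h0 : (0:ℤ) ≤ (b:ℤ) - |ρ| := by omega
  exact_mod_cast congrArg (fun z : ℤ => (z : ℂ)) (Int.toNat_of_nonneg h0)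

section PC
variable (N b : ℕ) [NeZero N]

noncomputable def pcoef : Fin N → ℂ :=
  fun t => (1/2) * (Ech N (-(b:ℤ)) t.val - 1) * lam N b t

lemma eval_pcoef (hbN : 2 * b < N) (ρ : ℤ) (h0 : 0 ≤ ρ) (hρb : ρ ≤ b) :
    Eval N ρ (pcoef N b) = ((ρ : ℂ) - (b : ℂ) / 2) := by
  have hterm : ∀ t : Fin N, pcoef N b t * EF N ρ t
      = (1/2) * (lam N b t * EF N (ρ - b) t) - (1/2) * (lam N b t * EF N ρ t) := by
    intro t
    rw [pcoef]
    have h1 : Ech N (-(b:ℤ)) t.val * Ech N ρ t.val = Ech N (ρ - (b:ℤ)) t.val := by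
      rw [Ech_mul]; congr 1; ring
    calc (1/2) * (Ech N (-(b:ℤ)) t.val - 1) * lam N b t * EF N ρ t
        = (1/2) * (lam N b t * (Ech N (-(b:ℤ)) t.val * EF N ρ t))
          - (1/2) * (lam N b t * EF N ρ t) := by simp only [EF]; ring
      _ = _ := by simp only [EF]; rw [h1]
  rw [Eval, Finset.sum_congr rfl fun t _ => hterm t, Finset.sum_sub_distrib,
    ← Finset.mul_sum, ← Finset.mul_sum]
  have e1 : ∑ t, lam N b t * EF N (ρ - b) t = (((b:ℤ) - |ρ - b| : ℤ) : ℂ) :=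
    eval_lam N b hbN (ρ - b) (by rw [abs_le]; omega)
  have e2 : ∑ t, lam N b t * EF N ρ t = (((b:ℤ) - |ρ| : ℤ) : ℂ) :=
    eval_lam N b hbN ρ (by rw [abs_le]; omega)
  rw [e1, e2, abs_of_nonneg h0, abs_of_nonpos (by omega : ρ - (b:ℤ) ≤ 0)]
  push_cast
  ring

lemma lam_eq_real (t : Fin N) :
    lam N b t = (((N:ℝ)⁻¹ * Complex.normSq (Gk N b t) : ℝ) : ℂ) := by
  rw [lam, Complex.mul_conj]
  push_cast
  ring

lemma l1_lam (hbN : 2 * b < N) : ∑ t, ‖lam N b t‖ = b := by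
  have hnn : ∀ t : Fin N, ‖lam N b t‖ = (N:ℝ)⁻¹ * Complex.normSq (Gk N b t) := by
    intro t
    rw [lam_eq_real, Complex.norm_real,
      Real.norm_of_nonneg (mul_nonneg (by positivity) (Complex.normSq_nonneg _))]
  have hsum : (∑ t, lam N b t) = (b : ℂ) := by
    have heval := eval_lam N b hbN 0 (by simp)
    rw [Eval] at heval
    simp only [abs_zero, sub_zero] at heval
    calc (∑ t, lam N b t) = ∑ t, lam N b t * EF N 0 t := by
          refine Finset.sum_congr rfl fun t _ => ?_
          have hone : EF N 0 t = 1 := by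
            rw [EF, Ech]; push_cast; simp
          rw [hone, mul_one]
      _ = (b : ℂ) := by rw [heval]; push_cast; ring
  have hc : (∑ t, ((((N:ℝ)⁻¹ * Complex.normSq (Gk N b t)) : ℝ) : ℂ)) = ((b:ℝ) : ℂ) := by
    rw [← Finset.sum_congr rfl fun t _ => lam_eq_real N b t]
    rw [hsum]; norm_num
  have hre : (∑ t, (N:ℝ)⁻¹ * Complex.normSq (Gk N b t)) = (b : ℝ) := by
    exact_mod_cast hc
  rw [Finset.sum_congr rfl fun t _ => hnn t, hre]

lemma l1_pcoef (hbN : 2 * b < N) : ∑ t, ‖pcoef N b t‖ ≤ b := by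
  calc ∑ t, ‖pcoef N b t‖ ≤ ∑ t, ‖lam N b t‖ := by
        refine Finset.sum_le_sum fun t _ => ?_
        rw [pcoef]
        rw [norm_mul, norm_mul]
        have h1 : ‖(1/2 : ℂ)‖ = 1/2 := by norm_num
        have h2 : ‖Ech N (-(b:ℤ)) t.val - 1‖ ≤ 2 := by
          calc ‖Ech N (-(b:ℤ)) t.val - 1‖ ≤ ‖Ech N (-(b:ℤ)) t.val‖ + ‖(1:ℂ)‖ := norm_sub_le _ _
            _ = 2 := by rw [Ech_norm]; norm_num
        calc ‖(1/2:ℂ)‖ * ‖Ech N (-(b:ℤ)) t.val - 1‖ * ‖lam N b t‖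
            ≤ (1/2) * 2 * ‖lam N b t‖ := by
              apply mul_le_mul_of_nonneg_right _ (norm_nonneg _)
              rw [h1]
              exact mul_le_mul_of_nonneg_left h2 (by norm_num)
          _ = ‖lam N b t‖ := by ring
    _ = b := l1_lam N b hbN
end PC

section FFsec
variable (N : ℕ) [NeZero N]

noncomputable def FF (c : Fin N → ℂ) (z : ℂ) (t : Fin N) : ℂ :=
  ∑' k : ℕ, z ^ k / (k.factorial : ℂ) * convPow N c k t

lemma summable_aux (c : Fin N → ℂ) (z : ℂ) (t : Fin N) :
    Summable (fun k : ℕ => ‖z ^ k / (k.factorial : ℂ) * convPow N c k t‖) := by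
  set B := ∑ s, ‖c s‖ with hB
  have hB0 : 0 ≤ B := Finset.sum_nonneg fun s _ => norm_nonneg _
  have hsum : Summable (fun k : ℕ => (‖z‖ * B) ^ k / (k.factorial : ℝ)) :=
    Real.summable_pow_div_factorial _
  refine Summable.of_nonneg_of_le (fun k => norm_nonneg _) (fun k => ?_) hsum
  rw [norm_mul, norm_div, norm_pow]
  have h1 : ‖(k.factorial : ℂ)‖ = (k.factorial : ℝ) := by
    rw [Complex.norm_natCast]
  rw [h1]
  calc ‖z‖ ^ k / (k.factorial : ℝ) * ‖convPow N c k t‖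
      ≤ ‖z‖ ^ k / (k.factorial : ℝ) * B ^ k := by
        apply mul_le_mul_of_nonneg_left (cpow_bound N c k t)
        positivity
    _ = (‖z‖ * B) ^ k / (k.factorial : ℝ) := by rw [mul_pow]; ring

lemma summable_aux' (c : Fin N → ℂ) (z : ℂ) (t : Fin N) :
    Summable (fun k : ℕ => z ^ k / (k.factorial : ℂ) * convPow N c k t) :=
  Summable.of_norm (summable_aux N c z t)

lemma eval_FF (c : Fin N → ℂ) (z : ℂ) (ρ : ℤ) :
    Eval N ρ (FF N c z) = Complex.exp (z * Eval N ρ c) := by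
  have h1 : Eval N ρ (FF N c z)
      = ∑ t, ∑' k : ℕ, z ^ k / (k.factorial : ℂ) * convPow N c k t * EF N ρ t := by
    rw [Eval]
    refine Finset.sum_congr rfl fun t _ => ?_
    rw [FF, tsum_mul_right]
  rw [h1, ← Summable.tsum_finsetSum (fun t _ => Summable.mul_right _ (summable_aux' N c z t))]
  have h2 : ∀ k : ℕ, (∑ t, z ^ k / (k.factorial : ℂ) * convPow N c k t * EF N ρ t)
      = (z * Eval N ρ c) ^ k / (k.factorial : ℂ) := by
    intro k
    calc (∑ t, z ^ k / (k.factorial : ℂ) * convPow N c k t * EF N ρ t)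
        = z ^ k / (k.factorial : ℂ) * ∑ t, convPow N c k t * EF N ρ t := by
          rw [Finset.mul_sum]
          exact Finset.sum_congr rfl fun t _ => by ring
      _ = z ^ k / (k.factorial : ℂ) * (Eval N ρ c) ^ k := by rw [← eval_cpow]; rfl
      _ = (z * Eval N ρ c) ^ k / (k.factorial : ℂ) := by rw [mul_pow]; ring
  rw [tsum_congr h2]
  rw [Complex.exp_eq_exp_ℂ, NormedSpace.exp_eq_tsum_div]

lemma l1_FF (c : Fin N → ℂ) (z : ℂ) :
    ∑ t, ‖FF N c z t‖ ≤ Real.exp (‖z‖ * ∑ s, ‖c s‖) := by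
  set B := ∑ s, ‖c s‖ with hB
  have hB0 : 0 ≤ B := Finset.sum_nonneg fun s _ => norm_nonneg _
  have h1 : ∀ t : Fin N, ‖FF N c z t‖ ≤ ∑' k : ℕ, ‖z ^ k / (k.factorial : ℂ) * convPow N c k t‖ :=
    fun t => norm_tsum_le_tsum_norm (summable_aux N c z t)
  calc ∑ t, ‖FF N c z t‖
      ≤ ∑ t, ∑' k : ℕ, ‖z ^ k / (k.factorial : ℂ) * convPow N c k t‖ :=
        Finset.sum_le_sum fun t _ => h1 t
    _ = ∑' k : ℕ, ∑ t, ‖z ^ k / (k.factorial : ℂ) * convPow N c k t‖ :=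
        (Summable.tsum_finsetSum (fun t _ => summable_aux N c z t)).symm
    _ ≤ ∑' k : ℕ, (‖z‖ * B) ^ k / (k.factorial : ℝ) := by
        refine Summable.tsum_le_tsum (fun k => ?_) ?_ ?_
        · calc ∑ t, ‖z ^ k / (k.factorial : ℂ) * convPow N c k t‖
              = ‖z‖ ^ k / (k.factorial : ℝ) * ∑ t, ‖convPow N c k t‖ := by
                rw [Finset.mul_sum]
                refine Finset.sum_congr rfl fun t _ => ?_
                rw [norm_mul, norm_div, norm_pow, Complex.norm_natCast]
            _ ≤ ‖z‖ ^ k / (k.factorial : ℝ) * B ^ k := by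
                apply mul_le_mul_of_nonneg_left (l1_cpow N c k)
                positivity
            _ = (‖z‖ * B) ^ k / (k.factorial : ℝ) := by rw [mul_pow]; ring
        · exact summable_sum (fun t _ => summable_aux N c z t)
        · exact Real.summable_pow_div_factorial _
    _ = Real.exp (‖z‖ * B) := by
        rw [Real.exp_eq_exp_ℝ, NormedSpace.exp_eq_tsum_div]
end FFsec
lemma atom_decomp (N b : ℕ) [NeZero N] (hbN : 2 * b < N) (f : ℝ) (hf0 : 0 ≤ f) (hf1 : f < 1)
    (Ω0 : ℕ) :
    ∃ d : Fin N → ℂ, ∃ u : Fin N → Fin N,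
      (∑ t, ‖d t‖) ≤ Real.exp (Real.pi * b / N) ∧
      ∀ w : ℕ, Ω0 ≤ w → w ≤ Ω0 + b →
        Complex.exp (2 * ↑Real.pi * Complex.I * (w:ℂ) * (f:ℂ))
          = ∑ t : Fin N, d t * Complex.exp (2 * ↑Real.pi * Complex.I * (w:ℂ)
              * (((u t : Fin N) : ℕ) / (N:ℂ))) := by
  have hN : 0 < N := Nat.pos_of_ne_zero (NeZero.ne N)
  have hNR : (0:ℝ) < N := by exact_mod_cast hN
  have hN0 : (N : ℂ) ≠ 0 := Nat.cast_ne_zero.2 hN.ne'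
  set m : ℤ := round ((N:ℝ) * f) with hm
  have hm0 : 0 ≤ m := by
    rw [hm, round_eq]
    have : (0:ℝ) ≤ (N:ℝ) * f + 1/2 := by positivity
    exact Int.le_floor.2 (by exact_mod_cast this)
  set δ : ℝ := f - m / N with hδdef
  have hδ : |δ| ≤ 1 / (2*N) := by
    have h1 : |(N:ℝ) * f - m| ≤ 1/2 := abs_sub_round _
    have h2 : δ = ((N:ℝ) * f - m) / N := by rw [hδdef]; field_simp
    rw [h2, abs_div, abs_of_pos hNR]
    rw [div_le_div_iff₀ hNR (by positivity)]
    calc |(N:ℝ)*f - m| * (2*N) ≤ (1/2) * (2*N) := by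
          apply mul_le_mul_of_nonneg_right h1 (by positivity)
      _ = 1 * N := by ring
  set z : ℂ := 2 * ↑Real.pi * Complex.I * (δ:ℂ) with hz
  have hznorm : ‖z‖ = 2 * Real.pi * |δ| := by
    have hz' : z = ((2 * Real.pi * δ : ℝ) : ℂ) * Complex.I := by rw [hz]; push_cast; ring
    rw [hz', norm_mul, Complex.norm_I, mul_one, Complex.norm_real, Real.norm_eq_abs, abs_mul,
      _root_.abs_of_nonneg (by positivity : (0:ℝ) ≤ 2 * Real.pi)]
  set C : ℂ := Complex.exp (2 * ↑Real.pi * Complex.I * (((Ω0:ℝ) + b/2 : ℝ):ℂ) * (δ:ℂ)) with hC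
  have hCnorm : ‖C‖ = 1 := by
    rw [hC]
    have : (2 * ↑Real.pi * Complex.I * (((Ω0:ℝ) + b/2 : ℝ):ℂ) * (δ:ℂ))
        = ((2 * Real.pi * ((Ω0:ℝ) + b/2) * δ : ℝ) : ℂ) * Complex.I := by
      push_cast; ring
    rw [this]
    exact Complex.norm_exp_ofReal_mul_I _
  set t0 : Fin N := ⟨m.toNat % N, Nat.mod_lt _ hN⟩ with ht0
  refine ⟨fun t => C * FF N (pcoef N b) z t * Ech N (-(Ω0:ℤ)) t.val, fun t => t0 + t, ?_, ?_⟩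
  · calc ∑ t, ‖C * FF N (pcoef N b) z t * Ech N (-(Ω0:ℤ)) t.val‖
        = ∑ t, ‖FF N (pcoef N b) z t‖ := by
          refine Finset.sum_congr rfl fun t _ => ?_
          rw [norm_mul, norm_mul, hCnorm, Ech_norm, one_mul, mul_one]
      _ ≤ Real.exp (‖z‖ * ∑ s, ‖pcoef N b s‖) := l1_FF N _ _
      _ ≤ Real.exp (Real.pi * b / N) := by
          apply Real.exp_le_exp.2
          calc ‖z‖ * ∑ s, ‖pcoef N b s‖ ≤ ‖z‖ * b := by
                apply mul_le_mul_of_nonneg_left (l1_pcoef N b hbN) (norm_nonneg _)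
            _ = 2 * Real.pi * |δ| * b := by rw [hznorm]
            _ ≤ 2 * Real.pi * (1/(2*N)) * b := by
                apply mul_le_mul_of_nonneg_right _ (by positivity)
                apply mul_le_mul_of_nonneg_left hδ (by positivity)
            _ = Real.pi * b / N := by field_simp
  · intro w hw1 hw2
    set ρ : ℤ := (w : ℤ) - (Ω0 : ℤ) with hρ
    have hρ0 : 0 ≤ ρ := by omega
    have hρb : ρ ≤ b := by omega
    -- step 1 : char at u t
    have hchar : ∀ t : Fin N, Complex.exp (2 * ↑Real.pi * Complex.I * (w:ℂ)
        * ((((t0 + t : Fin N) : ℕ) : ℂ) / (N:ℂ))) = Ech N (w:ℤ) m * Ech N (w:ℤ) t.val := by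
      intro t
      have h1 : Complex.exp (2 * ↑Real.pi * Complex.I * (w:ℂ)
          * ((((t0 + t : Fin N) : ℕ) : ℂ) / (N:ℂ))) = Ech N (w:ℤ) (((t0 + t : Fin N) : ℕ) : ℤ) := by
        rw [Ech]; push_cast; ring_nf
      rw [h1]
      have h2 : ((((t0 + t : Fin N) : ℕ) : ℤ)) % (N:ℤ) = (m + (t.val : ℤ)) % (N:ℤ) := by
        have hval : ((t0 + t : Fin N) : ℕ) = (t0.val + t.val) % N := Fin.val_add _ _
        rw [hval]
        have ht0v : t0.val = m.toNat % N := rfl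
        rw [ht0v]
        push_cast
        rw [Int.toNat_of_nonneg hm0]
        rw [Int.emod_emod_of_dvd _ dvd_rfl, Int.emod_add_emod]
      rw [Ech_congr N hN _ h2, Ech_addArg]
    -- step 2: assemble
    have hd : ∀ t : Fin N, (C * FF N (pcoef N b) z t * Ech N (-(Ω0:ℤ)) t.val)
        * (Ech N (w:ℤ) m * Ech N (w:ℤ) t.val)
        = C * Ech N (w:ℤ) m * (FF N (pcoef N b) z t * EF N ρ t) := by
      intro t
      have h3 : Ech N (-(Ω0:ℤ)) t.val * Ech N (w:ℤ) t.val = Ech N ρ t.val := by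
        rw [Ech_mul]; congr 1; omega
      rw [EF, ← h3]; ring
    have hsum : ∑ t : Fin N, (C * FF N (pcoef N b) z t * Ech N (-(Ω0:ℤ)) t.val)
        * Complex.exp (2 * ↑Real.pi * Complex.I * (w:ℂ) * ((((t0 + t : Fin N) : ℕ) : ℂ) / (N:ℂ)))
        = C * Ech N (w:ℤ) m * Complex.exp (z * ((ρ:ℂ) - (b:ℂ)/2)) := by
      calc ∑ t : Fin N, (C * FF N (pcoef N b) z t * Ech N (-(Ω0:ℤ)) t.val)
          * Complex.exp (2 * ↑Real.pi * Complex.I * (w:ℂ) * ((((t0 + t : Fin N) : ℕ) : ℂ) / (N:ℂ)))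
          = ∑ t : Fin N, C * Ech N (w:ℤ) m * (FF N (pcoef N b) z t * EF N ρ t) := by
            refine Finset.sum_congr rfl fun t _ => ?_
            rw [hchar t, hd t]
        _ = C * Ech N (w:ℤ) m * Eval N ρ (FF N (pcoef N b) z) := by
            rw [Eval, Finset.mul_sum]
        _ = C * Ech N (w:ℤ) m * Complex.exp (z * ((ρ:ℂ) - (b:ℂ)/2)) := by
            rw [eval_FF, eval_pcoef N b hbN ρ hρ0 hρb]
    rw [hsum]
    -- final exponential identity
    have hδc : (δ : ℂ) = (f : ℂ) - (m : ℂ) / (N : ℂ) := by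
      rw [hδdef]; push_cast; ring
    rw [hC, Ech, ← Complex.exp_add, ← Complex.exp_add]
    congr 1
    have hρc : ((ρ : ℤ) : ℂ) = (w : ℂ) - (Ω0 : ℂ) := by rw [hρ]; push_cast; ring
    rw [hz, hρc, hδc]
    push_cast
    field_simp
    ring
/-- The atomic norm induced by a set of atoms `𝒜 ⊆ ℂ^n` (value `+∞` if no representation
exists). -/
noncomputable def atomicNorm {n : Type*} [Fintype n] (𝒜 : Set (n → ℂ)) (y : n → ℂ) : ℝ≥0∞ :=
  sInf {t : ℝ≥0∞ | ∃ (k : ℕ) (c : Fin k → ℝ) (a : Fin k → (n → ℂ)),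
    (∀ i, 0 ≤ c i) ∧ (∀ i, a i ∈ 𝒜) ∧ y = ∑ i, (c i : ℂ) • a i ∧
    t = ∑ i, ENNReal.ofReal (c i)}

lemma atomicNorm_anti {n : Type*} [Fintype n] {A1 A2 : Set (n → ℂ)} (h : A1 ⊆ A2)
    (y : n → ℂ) : atomicNorm A2 y ≤ atomicNorm A1 y := by
  apply sInf_le_sInf
  rintro T ⟨k, c, a, hc, ha, hy, hT⟩
  exact ⟨k, c, a, hc, fun i => h (ha i), hy, hT⟩

lemma le_mul_sInf {x c : ℝ≥0∞} {S : Set ℝ≥0∞} (hc0 : c ≠ 0) (hc : c ≠ ∞)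
    (h : ∀ T ∈ S, x ≤ c * T) : x ≤ c * sInf S := by
  rcases S.eq_empty_or_nonempty with rfl | hne
  · rw [show sInf (∅ : Set ℝ≥0∞) = ⊤ from sInf_empty, ENNReal.mul_top hc0]
    exact le_top
  · have : Nonempty S := hne.to_subtype
    rw [sInf_eq_iInf', ENNReal.mul_iInf_of_ne hc0 hc]
    exact le_iInf fun t => h t t.2

lemma atomicNorm_transfer {n : Type*} [Fintype n] (A1 A2 : Set (n → ℂ)) (K : ℕ) (C : ℝ)
    (hC0 : 0 < C)
    (h : ∀ a ∈ A1, ∃ (d : Fin K → ℝ) (w : Fin K → (n → ℂ)),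
      (∀ t, 0 ≤ d t) ∧ (∀ t, w t ∈ A2) ∧ a = ∑ t, (d t : ℂ) • w t ∧ ∑ t, d t ≤ C)
    (y : n → ℂ) : atomicNorm A2 y ≤ ENNReal.ofReal C * atomicNorm A1 y := by
  apply le_mul_sInf (by simp [hC0]) ENNReal.ofReal_ne_top
  rintro T ⟨k, c, a, hc0, ha, hy, hT⟩
  choose d w hd0 hw hrep hsum using fun i => h (a i) (ha i)
  set e : Fin k × Fin K ≃ Fin (k * K) := finProdFinEquiv with he
  set c' : Fin (k * K) → ℝ := fun j => c (e.symm j).1 * d (e.symm j).1 (e.symm j).2 with hc'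
  set a' : Fin (k * K) → (n → ℂ) := fun j => w (e.symm j).1 (e.symm j).2 with ha'
  have hmem : atomicNorm A2 y ≤ ∑ j, ENNReal.ofReal (c' j) := by
    apply sInf_le
    refine ⟨k * K, c', a', ?_, ?_, ?_, rfl⟩
    · intro j
      exact mul_nonneg (hc0 _) (hd0 _ _)
    · intro j
      exact hw _ _
    · rw [hy]
      rw [← Equiv.sum_comp e (fun j => ((c' j : ℝ) : ℂ) • a' j)]
      have : ∀ p : Fin k × Fin K, ((c' (e p) : ℝ) : ℂ) • a' (e p)
          = ((c p.1 : ℝ) : ℂ) • (((d p.1 p.2 : ℝ) : ℂ) • w p.1 p.2) := by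
        intro p
        rw [hc', ha']
        simp only [Equiv.symm_apply_apply]
        rw [smul_smul]
        norm_cast
      rw [Finset.sum_congr rfl fun p _ => this p, Fintype.sum_prod_type]
      refine Finset.sum_congr rfl fun i _ => ?_
      rw [hrep i, Finset.smul_sum]
  refine hmem.trans ?_
  have hval : (∑ j, ENNReal.ofReal (c' j)) ≤ ENNReal.ofReal C * T := by
    rw [← Equiv.sum_comp e (fun j => ENNReal.ofReal (c' j)), Fintype.sum_prod_type]
    have step : ∀ i : Fin k, (∑ t : Fin K, ENNReal.ofReal (c' (e (i, t))))
        ≤ ENNReal.ofReal (c i) * ENNReal.ofReal C := by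
      intro i
      have : ∀ t : Fin K, ENNReal.ofReal (c' (e (i, t)))
          = ENNReal.ofReal (c i) * ENNReal.ofReal (d i t) := by
        intro t
        rw [hc']
        simp only [Equiv.symm_apply_apply]
        exact ENNReal.ofReal_mul (hc0 i)
      rw [Finset.sum_congr rfl fun t _ => this t, ← Finset.mul_sum]
      apply mul_le_mul_right
      rw [← ENNReal.ofReal_sum_of_nonneg (fun t _ => hd0 i t)]
      exact ENNReal.ofReal_le_ofReal (hsum i)
    calc (∑ i : Fin k, ∑ t : Fin K, ENNReal.ofReal (c' (e (i, t))))
        ≤ ∑ i : Fin k, ENNReal.ofReal (c i) * ENNReal.ofReal C :=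
          Finset.sum_le_sum fun i _ => step i
      _ = ENNReal.ofReal C * T := by
          rw [← Finset.sum_mul, mul_comm, hT]
  exact hval


/-- Comparison of the continuous atomic norm `‖·‖_{𝒜(Ω)}` and the grid-based atomic norm
`‖·‖_{𝒜_N(Ω)}` for sampled sinusoids on the index set `Ω` with range `Mbar`:
`(1 − πMbar/N) ‖z‖_{𝒜_N(Ω)} ≤ ‖z‖_{𝒜(Ω)} ≤ ‖z‖_{𝒜_N(Ω)}` for `N > πMbar`. -/
theorem atomicNorm_grid_comparison (L : ℕ) (hL : 0 < L)
    (Ω : Fin L → ℕ) (hΩ : StrictMono Ω) (Mbar : ℕ)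
    (hM : Mbar = Ω ⟨L - 1, Nat.sub_lt hL Nat.one_pos⟩ + 1 - Ω ⟨0, hL⟩)
    (N : ℕ) (hN : Real.pi * (Mbar : ℝ) < (N : ℝ)) (z : Fin L → ℂ) :
    ENNReal.ofReal (1 - Real.pi * (Mbar : ℝ) / (N : ℝ)) *
      atomicNorm {a : Fin L → ℂ | ∃ m : Fin N, ∃ φ : ℂ, ‖φ‖ = 1 ∧
        a = fun j => φ * Complex.exp (2 * π * I * (Ω j : ℂ) * (((m : ℕ) : ℂ) / (N : ℂ)))} z
      ≤ atomicNorm {a : Fin L → ℂ | ∃ f ∈ Set.Ico (0 : ℝ) 1, ∃ φ : ℂ, ‖φ‖ = 1 ∧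
        a = fun j => φ * Complex.exp (2 * π * I * (Ω j : ℂ) * (f : ℂ))} z
    ∧
    atomicNorm {a : Fin L → ℂ | ∃ f ∈ Set.Ico (0 : ℝ) 1, ∃ φ : ℂ, ‖φ‖ = 1 ∧
        a = fun j => φ * Complex.exp (2 * π * I * (Ω j : ℂ) * (f : ℂ))} z
      ≤ atomicNorm {a : Fin L → ℂ | ∃ m : Fin N, ∃ φ : ℂ, ‖φ‖ = 1 ∧
        a = fun j => φ * Complex.exp (2 * π * I * (Ω j : ℂ) * (((m : ℕ) : ℂ) / (N : ℂ)))} z := by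
  -- basic positivity facts
  have hΩle : Ω ⟨0, hL⟩ ≤ Ω ⟨L - 1, Nat.sub_lt hL Nat.one_pos⟩ :=
    hΩ.monotone (by simp [Fin.le_def])
  have hMpos : 0 < Mbar := by omega
  have hNR : Real.pi * (Mbar : ℝ) > 0 := by
    have := Real.pi_pos
    have : (0:ℝ) < (Mbar:ℝ) := by exact_mod_cast hMpos
    positivity
  have hNpos : 0 < N := by
    by_contra h
    push_neg at h
    interval_cases N
    simp at hN
    linarith
  haveI : NeZero N := ⟨hNpos.ne'⟩
  have hNRpos : (0:ℝ) < N := by exact_mod_cast hNpos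
  set b : ℕ := Mbar - 1 with hb
  have hbM : (b:ℝ) ≤ (Mbar:ℝ) := by exact_mod_cast Nat.sub_le _ _
  have hbN : 2 * b < N := by
    have h2 : (2:ℝ) * b ≤ 2 * Mbar := by nlinarith
    have h3 : (2:ℝ) * Mbar < Real.pi * Mbar := by
      have : (0:ℝ) < (Mbar:ℝ) := by exact_mod_cast hMpos
      nlinarith [Real.pi_gt_three]
    have h4 : ((2 * b : ℕ) : ℝ) < (N:ℝ) := by push_cast; linarith
    exact_mod_cast h4
  set Ω0 : ℕ := Ω ⟨0, hL⟩ with hΩ0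
  -- the two atom sets
  set Agrid := {a : Fin L → ℂ | ∃ m : Fin N, ∃ φ : ℂ, ‖φ‖ = 1 ∧
    a = fun j => φ * Complex.exp (2 * π * I * (Ω j : ℂ) * (((m : ℕ) : ℂ) / (N : ℂ)))} with hAgrid
  set Acont := {a : Fin L → ℂ | ∃ f ∈ Set.Ico (0 : ℝ) 1, ∃ φ : ℂ, ‖φ‖ = 1 ∧
    a = fun j => φ * Complex.exp (2 * π * I * (Ω j : ℂ) * (f : ℂ))} with hAcont
  have hsubset : Agrid ⊆ Acont := by
    rintro a ⟨m, φ, hφ, rfl⟩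
    refine ⟨(m:ℝ)/N, ⟨by positivity, ?_⟩, φ, hφ, ?_⟩
    · rw [div_lt_one hNRpos]
      exact_mod_cast m.isLt
    · funext j
      congr 1
      congr 1
      push_cast
      ring
  have hright := atomicNorm_anti hsubset z
  refine ⟨?_, hright⟩
  -- left inequality
  have hΩj : ∀ j : Fin L, Ω0 ≤ Ω j ∧ Ω j ≤ Ω0 + b := by
    intro j
    constructor
    · exact hΩ.monotone (by simp [Fin.le_def])
    · have h1 : Ω j ≤ Ω ⟨L - 1, Nat.sub_lt hL Nat.one_pos⟩ :=
        hΩ.monotone (by simp [Fin.le_def]; omega)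
      omega
  set C : ℝ := Real.exp (Real.pi * b / N) with hC
  have hdecomp : ∀ a ∈ Acont, ∃ (d : Fin N → ℝ) (w : Fin N → (Fin L → ℂ)),
      (∀ t, 0 ≤ d t) ∧ (∀ t, w t ∈ Agrid) ∧ a = ∑ t, (d t : ℂ) • w t ∧ ∑ t, d t ≤ C := by
    rintro a ⟨f, ⟨hf0, hf1⟩, φ, hφ, rfl⟩
    obtain ⟨d, u, hl1, hid⟩ := atom_decomp N b hbN f hf0 hf1 Ω0
    set ψ : Fin N → ℂ := fun t => if d t = 0 then 1 else φ * d t / (‖d t‖ : ℂ) with hψ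
    have hψnorm : ∀ t, ‖ψ t‖ = 1 := by
      intro t
      rw [hψ]
      by_cases hdt : d t = 0
      · simp [hdt]
      · have hne : (‖d t‖ : ℂ) ≠ 0 := by
          simp [Complex.ofReal_ne_zero, norm_ne_zero_iff, hdt]
        simp only [if_neg hdt]
        rw [norm_div, norm_mul, hφ, one_mul]
        rw [Complex.norm_real, Real.norm_of_nonneg (norm_nonneg _)]
        rw [div_self (norm_ne_zero_iff.2 hdt)]
    refine ⟨fun t => ‖d t‖, fun t => fun j => ψ t *
        Complex.exp (2 * π * I * (Ω j : ℂ) * ((((u t : Fin N) : ℕ) : ℂ) / (N : ℂ))), ?_, ?_, ?_, ?_⟩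
    · intro t; exact norm_nonneg _
    · intro t
      exact ⟨u t, ψ t, hψnorm t, rfl⟩
    · funext j
      have hidj := hid (Ω j) (hΩj j).1 (hΩj j).2
      rw [Finset.sum_apply]
      simp only [Pi.smul_apply, smul_eq_mul]
      calc φ * Complex.exp (2 * π * I * (Ω j : ℂ) * (f : ℂ))
          = φ * ∑ t : Fin N, d t * Complex.exp (2 * ↑Real.pi * Complex.I * ((Ω j : ℕ):ℂ)
              * ((((u t : Fin N) : ℕ) : ℂ) / (N:ℂ))) := by rw [← hidj]
        _ = ∑ t : Fin N, φ * d t * Complex.exp (2 * ↑Real.pi * Complex.I * ((Ω j : ℕ):ℂ)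
              * ((((u t : Fin N) : ℕ) : ℂ) / (N:ℂ))) := by
            rw [Finset.mul_sum]
            exact Finset.sum_congr rfl fun t _ => by ring
        _ = _ := by
            refine Finset.sum_congr rfl fun t _ => ?_
            rw [hψ]
            by_cases hdt : d t = 0
            · simp [hdt]
            · have hne : (‖d t‖ : ℂ) ≠ 0 := by
                simp [Complex.ofReal_ne_zero, norm_ne_zero_iff, hdt]
              simp only [if_neg hdt]
              have hne' : ((‖d t‖ : ℝ) : ℂ) ≠ 0 := hne
              field_simp
    · exact hl1
  have htrans := atomicNorm_transfer Acont Agrid N C (Real.exp_pos _) hdecomp z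
  -- multiply through
  calc ENNReal.ofReal (1 - Real.pi * (Mbar : ℝ) / (N : ℝ)) * atomicNorm Agrid z
      ≤ ENNReal.ofReal (1 - Real.pi * (Mbar : ℝ) / (N : ℝ)) *
        (ENNReal.ofReal C * atomicNorm Acont z) := mul_le_mul_right htrans _
    _ = (ENNReal.ofReal (1 - Real.pi * (Mbar : ℝ) / (N : ℝ)) * ENNReal.ofReal C) *
        atomicNorm Acont z := by rw [mul_assoc]
    _ ≤ 1 * atomicNorm Acont z := by
        apply mul_le_mul_left
        have hnn : 0 ≤ 1 - Real.pi * (Mbar : ℝ) / (N : ℝ) := by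
          rw [sub_nonneg, div_le_one hNRpos]
          exact hN.le
        rw [← ENNReal.ofReal_mul hnn]
        apply ENNReal.ofReal_le_one.2
        set x : ℝ := Real.pi * b / N with hx
        have hx0 : 0 ≤ x := by positivity
        have h1 : 1 - Real.pi * (Mbar : ℝ) / (N : ℝ) ≤ 1 - x := by
          rw [hx]
          have hmono : Real.pi * (b:ℝ) / N ≤ Real.pi * (Mbar:ℝ) / N :=
            (div_le_div_iff_of_pos_right hNRpos).2 (by nlinarith [Real.pi_pos])
          linarith
        have h2 : 1 - x ≤ Real.exp (-x) := by
          have := Real.add_one_le_exp (-x)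
          linarith
        calc (1 - Real.pi * (Mbar : ℝ) / (N : ℝ)) * C ≤ Real.exp (-x) * Real.exp x := by
              apply mul_le_mul (h1.trans h2) le_rfl (Real.exp_pos _).le (Real.exp_pos _).le
          _ = 1 := by rw [← Real.exp_add]; simp
    _ = atomicNorm Acont z := one_mul _
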